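/- If n ≡ 0 (mod 3) and n ≥ 3, then the path P_n has a maximum dissociation set that contains exactly one of the two leaves of P_n. -/
import Mathlib


open scoped Classical

/-- `F` is a dissociation set of `G`: the induced subgraph `G[F]` has maximum degree ≤ 1. -/
def IsDissocSet {V : Type*} (G : SimpleGraph V) (F : Set V) : Prop :=
  ∀ u ∈ F, ∀ w ∈ F, ∀ w' ∈ F, G.Adj u w → G.Adj u w' → w = w'

/-- `F` is a maximum dissociation set of `G`. -/
def IsMaxDissocSet {V : Type*} (G : SimpleGraph V) (F : Set V) : Prop :=
  IsDissocSet G F ∧ ∀ F' : Set V, IsDissocSet G F' → F'.ncard ≤ F.ncard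

/-- The dissociation number ψ(G). -/
noncomputable def dissNum {V : Type*} (G : SimpleGraph V) : ℕ :=
  sSup {n | ∃ F : Set V, IsDissocSet G F ∧ F.ncard = n}

/-- `F` is a maximum dissociation set of the induced subgraph `G[S]`. -/
def IsMaxDissocOn {V : Type*} (G : SimpleGraph V) (S F : Set V) : Prop :=
  F ⊆ S ∧ IsDissocSet G F ∧
    ∀ F' : Set V, F' ⊆ S → IsDissocSet G F' → F'.ncard ≤ F.ncard

/-- The dissociation number of the induced subgraph `G[S]`. -/
noncomputable def dissNumOn {V : Type*} (G : SimpleGraph V) (S : Set V) : ℕ :=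
  sSup {n | ∃ F : Set V, F ⊆ S ∧ IsDissocSet G F ∧ F.ncard = n}

lemma fiber_le_two {n : ℕ} {F' : Set (Fin n)}
    (hd : IsDissocSet (SimpleGraph.pathGraph n) F') (a : ℕ) :
    (F'.toFinset.filter (fun i => i.val / 3 = a)).card ≤ 2 := by
  by_contra h
  push_neg at h
  set s := F'.toFinset.filter (fun i => i.val / 3 = a) with hs
  have hsub : s.image Fin.val ⊆ Finset.Ico (3 * a) (3 * a + 3) := by
    intro x hx
    simp only [Finset.mem_image] at hx
    obtain ⟨i, hi, rfl⟩ := hx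
    simp only [hs, Finset.mem_filter] at hi
    have := i.isLt
    simp only [Finset.mem_Ico]
    omega
  have hcard : (s.image Fin.val).card = s.card :=
    Finset.card_image_of_injective _ Fin.val_injective
  have heq : s.image Fin.val = Finset.Ico (3 * a) (3 * a + 3) := by
    apply Finset.eq_of_subset_of_card_le hsub
    rw [hcard, Nat.card_Ico]
    omega
  have hmem : ∀ k ∈ Finset.Ico (3 * a) (3 * a + 3), ∃ i : Fin n, i ∈ F' ∧ i.val = k := by
    intro k hk
    rw [← heq] at hk
    simp only [Finset.mem_image] at hk
    obtain ⟨i, hi, rfl⟩ := hk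
    simp only [hs, Finset.mem_filter, Set.mem_toFinset] at hi
    exact ⟨i, hi.1, rfl⟩
  obtain ⟨i0, hi0, hv0⟩ := hmem (3 * a) (by simp [Finset.mem_Ico])
  obtain ⟨i1, hi1, hv1⟩ := hmem (3 * a + 1) (by simp [Finset.mem_Ico])
  obtain ⟨i2, hi2, hv2⟩ := hmem (3 * a + 2) (by simp [Finset.mem_Ico])
  have h02 : i0 = i2 := hd i1 hi1 i0 hi0 i2 hi2
    (SimpleGraph.pathGraph_adj.mpr (by omega)) (SimpleGraph.pathGraph_adj.mpr (by omega))
  have : i0.val = i2.val := by rw [h02]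
  omega

lemma dissoc_card_le {n : ℕ} (hmod : n % 3 = 0) {F' : Set (Fin n)}
    (hd : IsDissocSet (SimpleGraph.pathGraph n) F') :
    F'.ncard ≤ 2 * (n / 3) := by
  rw [Set.ncard_eq_toFinset_card']
  calc F'.toFinset.card ≤ 2 * (Finset.range (n / 3)).card := by
        apply Finset.card_le_mul_card_image_of_maps_to (f := fun i => i.val / 3)
        · intro i _
          simp only [Finset.mem_range]
          have := i.isLt
          omega
        · intro b _
          exact fiber_le_two hd b
    _ = 2 * (n / 3) := by rw [Finset.card_range]

theorem stmt1 (n : ℕ) (h3 : 3 ≤ n) (hmod : n % 3 = 0) :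
    ∃ F : Set (Fin n), IsMaxDissocSet (SimpleGraph.pathGraph n) F ∧
      Xor' ((⟨0, by omega⟩ : Fin n) ∈ F) ((⟨n - 1, by omega⟩ : Fin n) ∈ F) := by
  set Ffin : Finset (Fin n) := Finset.univ.filter (fun i => i.val % 3 ≠ 2) with hFfin
  refine ⟨↑Ffin, ⟨?_, ?_⟩, ?_⟩
  · -- dissociation
    intro u hu w hw w' hw' haw haw'
    simp only [hFfin, Finset.coe_filter, Set.mem_setOf_eq, Finset.mem_univ, true_and] at hu hw hw'
    rw [SimpleGraph.pathGraph_adj] at haw haw'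
    have : w.val = w'.val := by omega
    exact Fin.ext this
  · -- maximality
    intro F' hF'
    have h1 : F'.ncard ≤ 2 * (n / 3) := dissoc_card_le hmod hF'
    have h2 : 2 * (n / 3) ≤ Ffin.card := by
      have hg : ∀ k : Fin (2 * (n / 3)), 3 * (k.val / 2) + k.val % 2 < n := by
        intro k; have := k.isLt; omega
      set g : Fin (2 * (n / 3)) → Fin n := fun k => ⟨3 * (k.val / 2) + k.val % 2, hg k⟩ with hgdef
      have hginj : Function.Injective g := by
        intro a b hab
        have : (g a).val = (g b).val := by rw [hab]
        simp only [hgdef] at this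
        exact Fin.ext (by omega)
      have hmaps : Finset.univ.image g ⊆ Ffin := by
        intro x hx
        simp only [Finset.mem_image] at hx
        obtain ⟨k, _, rfl⟩ := hx
        simp only [hFfin, Finset.mem_filter, Finset.mem_univ, true_and, hgdef]
        omega
      calc 2 * (n / 3) = Finset.univ.card := (Finset.card_fin _).symm
        _ = (Finset.univ.image g).card := (Finset.card_image_of_injective _ hginj).symm
        _ ≤ Ffin.card := Finset.card_le_card hmaps
    rw [Set.ncard_coe_finset]
    omega
  · -- Xor'
    left
    constructor
    · simp only [hFfin, Finset.coe_filter, Set.mem_setOf_eq, Finset.mem_univ, true_and]; omega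
    · simp only [hFfin, Finset.coe_filter, Set.mem_setOf_eq, Finset.mem_univ, true_and]
      omega
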